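/- Let X, Y be real Banach spaces, U ⊆ X open, and f : U → Y a continuous map which is Gâteaux differentiable at every point of U. Then the pseudo-Jacobian mapping Jf defined by Jf(x) = {f'(x)} for x ∈ U satisfies the chain rule condition on U. -/

import Mathlib

open Filter Topology Metric Set Bornology

noncomputable section

/-- Upper right-hand Dini directional derivative of `φ` at `x` in direction `v`. -/
def diniUpper {X : Type*} [NormedAddCommGroup X] [NormedSpace ℝ X]
    (φ : X → ℝ) (x v : X) : ℝ :=
  Filter.limsup (fun t : ℝ => (φ (x + t • v) - φ x) / t) (𝓝[>] (0 : ℝ))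

/-- `J` is a pseudo-Jacobian of `f` at `x`: `J` is a nonempty set of bounded linear
operators such that for every continuous linear functional `p` on `Y` and every
direction `v`, the upper Dini derivative of `p ∘ f` at `x` in direction `v` is bounded
by `sup {p (T v) : T ∈ J}`. -/
def IsPseudoJacobianAt {X Y : Type*} [NormedAddCommGroup X] [NormedSpace ℝ X]
    [NormedAddCommGroup Y] [NormedSpace ℝ Y]
    (f : X → Y) (J : Set (X →L[ℝ] Y)) (x : X) : Prop :=
  J.Nonempty ∧ ∀ (p : Y →L[ℝ] ℝ) (v : X),
    diniUpper (fun z => p (f z)) x v ≤ sSup ((fun T : X →L[ℝ] Y => p (T v)) '' J)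


/-- Clarke generalized directional derivative of `φ` at `y` in direction `w`:
`limsup_{z → y, t → 0⁺} (φ (z + t w) − φ z)/t`. -/
def clarkeDirDeriv {Y : Type*} [NormedAddCommGroup Y] [NormedSpace ℝ Y]
    (φ : Y → ℝ) (y w : Y) : ℝ :=
  Filter.limsup (fun q : Y × ℝ => (φ (q.1 + q.2 • w) - φ q.1) / q.2)
    ((𝓝 y) ×ˢ (𝓝[>] (0 : ℝ)))

/-- Clarke subdifferential of `φ` at `y`. -/
def clarkeSubdiff {Y : Type*} [NormedAddCommGroup Y] [NormedSpace ℝ Y]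
    (φ : Y → ℝ) (y : Y) : Set (Y →L[ℝ] ℝ) :=
  {p | ∀ w : Y, p w ≤ clarkeDirDeriv φ y w}

/-- The set `A_{x,y}(f) = ∂‖·‖(f x − y) ∘ co (Jf x) ⊆ X*`. -/
def pjComp {X Y : Type*} [NormedAddCommGroup X] [NormedSpace ℝ X]
    [NormedAddCommGroup Y] [NormedSpace ℝ Y]
    (f : X → Y) (Jf : X → Set (X →L[ℝ] Y)) (x : X) (y : Y) : Set (X →L[ℝ] ℝ) :=
  {S | ∃ p ∈ clarkeSubdiff (fun w : Y => ‖w‖) (f x - y),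
       ∃ T ∈ convexHull ℝ (Jf x), S = p.comp T}

/-- The pseudo-Jacobian mapping `Jf` satisfies the chain rule condition on `U`:
for every `x ∈ U` and every `y ≠ f x`, the set `A_{x,y}(f)` is weak-star closed,
convex, and is a pseudo-Jacobian at `x` of the function `z ↦ ‖f z − y‖`. -/
def ChainRuleCond {X Y : Type*} [NormedAddCommGroup X] [NormedSpace ℝ X]
    [NormedAddCommGroup Y] [NormedSpace ℝ Y]
    (f : X → Y) (Jf : X → Set (X →L[ℝ] Y)) (U : Set X) : Prop :=
  ∀ x ∈ U, ∀ y : Y, y ≠ f x →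
    IsClosed ((StrongDual.toWeakDual : (X →L[ℝ] ℝ) → WeakDual ℝ X) ''
        pjComp f Jf x y) ∧
    Convex ℝ (pjComp f Jf x y) ∧
    IsPseudoJacobianAt (fun z : X => ‖f z - y‖) (pjComp f Jf x y) x

/-- `f` is Gâteaux differentiable at `x` with derivative `f'`. -/
def HasGateauxDerivAt {X Y : Type*} [NormedAddCommGroup X] [NormedSpace ℝ X]
    [NormedAddCommGroup Y] [NormedSpace ℝ Y]
    (f : X → Y) (f' : X →L[ℝ] Y) (x : X) : Prop :=
  ∀ v : X, Filter.Tendsto (fun t : ℝ => t⁻¹ • (f (x + t • v) - f x))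
    (𝓝[≠] (0 : ℝ)) (𝓝 (f' v))

namespace GSAux

variable {Y : Type*} [NormedAddCommGroup Y] [NormedSpace ℝ Y]

/-- Difference quotient of the norm at `u` in direction `z`. -/
def sfun (u z : Y) (t : ℝ) : ℝ := (‖u + t • z‖ - ‖u‖) / t

/-- One-sided directional derivative of the norm at `u` in direction `z`. -/
def ndd (u z : Y) : ℝ := sInf (sfun u z '' Set.Ioi 0)

lemma sfun_le (u z : Y) {t : ℝ} (ht : 0 < t) : sfun u z t ≤ ‖z‖ := by
  rw [sfun, div_le_iff₀ ht]
  have h1 := norm_add_le u (t • z)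
  have h2 : ‖t • z‖ = t * ‖z‖ := by
    rw [norm_smul, Real.norm_eq_abs, abs_of_pos ht]
  nlinarith

lemma neg_norm_le_sfun (u z : Y) {t : ℝ} (ht : 0 < t) : -‖z‖ ≤ sfun u z t := by
  rw [sfun, le_div_iff₀ ht]
  have h1 := norm_add_le (u + t • z) (-(t • z))
  simp only [add_neg_cancel_right, norm_neg] at h1
  have h2 : ‖t • z‖ = t * ‖z‖ := by
    rw [norm_smul, Real.norm_eq_abs, abs_of_pos ht]
  nlinarith

lemma sfun_nonempty (u z : Y) : (sfun u z '' Set.Ioi 0).Nonempty :=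
  ⟨sfun u z 1, 1, by norm_num, rfl⟩

lemma sfun_bddBelow (u z : Y) : BddBelow (sfun u z '' Set.Ioi 0) := by
  refine ⟨-‖z‖, ?_⟩
  rintro a ⟨t, ht, rfl⟩
  exact neg_norm_le_sfun u z ht

lemma ndd_le (u z : Y) {t : ℝ} (ht : 0 < t) : ndd u z ≤ sfun u z t :=
  csInf_le (sfun_bddBelow u z) ⟨t, ht, rfl⟩

lemma ndd_le_norm (u z : Y) : ndd u z ≤ ‖z‖ :=
  (ndd_le u z one_pos).trans (sfun_le u z one_pos)

lemma neg_norm_le_ndd (u z : Y) : -‖z‖ ≤ ndd u z :=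
  le_csInf (sfun_nonempty u z) (by rintro a ⟨t, ht, rfl⟩; exact neg_norm_le_sfun u z ht)

lemma sfun_monotoneOn (u z : Y) : MonotoneOn (sfun u z) (Set.Ioi 0) := by
  rintro s (hs : (0:ℝ) < s) t (ht : (0:ℝ) < t) hst
  have hst' : s / t ≤ 1 := div_le_one_of_le₀ hst ht.le
  have hst0 : 0 ≤ s / t := div_nonneg hs.le ht.le
  have key : ‖u + s • z‖ ≤ (1 - s / t) * ‖u‖ + (s / t) * ‖u + t • z‖ := by
    have heq : u + s • z = (1 - s / t) • u + (s / t) • (u + t • z) := by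
      rw [smul_add, smul_smul, div_mul_cancel₀ _ (ne_of_gt ht)]
      rw [sub_smul, one_smul]
      abel
    calc ‖u + s • z‖ = ‖(1 - s / t) • u + (s / t) • (u + t • z)‖ := by rw [← heq]
      _ ≤ ‖(1 - s / t) • u‖ + ‖(s / t) • (u + t • z)‖ := norm_add_le _ _
      _ = (1 - s / t) * ‖u‖ + (s / t) * ‖u + t • z‖ := by
          rw [norm_smul, norm_smul, Real.norm_eq_abs, Real.norm_eq_abs,
            abs_of_nonneg (by linarith), abs_of_nonneg hst0]
  rw [sfun, sfun, div_le_div_iff₀ hs ht]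
  have h3 : ‖u + s • z‖ * t ≤ ((1 - s / t) * ‖u‖ + (s / t) * ‖u + t • z‖) * t :=
    mul_le_mul_of_nonneg_right key ht.le
  have h4 : ((1 - s / t) * ‖u‖ + (s / t) * ‖u + t • z‖) * t
      = (t - s) * ‖u‖ + s * ‖u + t • z‖ := by
    field_simp
    try ring
  nlinarith

lemma tendsto_sfun (u z : Y) : Tendsto (sfun u z) (𝓝[>] 0) (𝓝 (ndd u z)) :=
  MonotoneOn.tendsto_nhdsGT (sfun_monotoneOn u z) (sfun_bddBelow u z)

lemma ndd_zero (u : Y) : ndd u 0 = 0 := by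
  have h1 : ndd u 0 ≤ 0 := by
    have := ndd_le u (0 : Y) one_pos
    simpa [sfun] using this
  have h2 : (0:ℝ) ≤ ndd u 0 := by
    refine le_csInf (sfun_nonempty u 0) ?_
    rintro a ⟨t, ht, rfl⟩
    simp [sfun]
  linarith

lemma ndd_smul_le (u z : Y) {c : ℝ} (hc : 0 < c) : ndd u (c • z) ≤ c * ndd u z := by
  have h : ∀ t : ℝ, 0 < t → ndd u (c • z) ≤ c * sfun u z t := by
    intro t ht
    have heq : sfun u (c • z) (t / c) = c * sfun u z t := by
      rw [sfun, sfun, smul_smul, div_mul_cancel₀ _ (ne_of_gt hc)]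
      field_simp
    rw [← heq]
    exact ndd_le u (c • z) (div_pos ht hc)
  have h2 : ndd u (c • z) / c ≤ ndd u z := by
    refine le_csInf (sfun_nonempty u z) ?_
    rintro a ⟨t, ht, rfl⟩
    rw [div_le_iff₀ hc]
    have := h t ht
    linarith [mul_comm c (sfun u z t)]
  calc ndd u (c • z) = (ndd u (c • z) / c) * c := by field_simp
    _ ≤ ndd u z * c := mul_le_mul_of_nonneg_right h2 hc.le
    _ = c * ndd u z := mul_comm _ _

lemma ndd_smul (u z : Y) {c : ℝ} (hc : 0 < c) : ndd u (c • z) = c * ndd u z := by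
  refine le_antisymm (ndd_smul_le u z hc) ?_
  have h := ndd_smul_le u (c • z) (inv_pos.2 hc)
  rw [smul_smul, inv_mul_cancel₀ (ne_of_gt hc), one_smul] at h
  have h2 := mul_le_mul_of_nonneg_left h hc.le
  rw [← mul_assoc, mul_inv_cancel₀ (ne_of_gt hc), one_mul] at h2
  linarith

lemma ndd_add (u z₁ z₂ : Y) : ndd u (z₁ + z₂) ≤ ndd u z₁ + ndd u z₂ := by
  refine le_of_forall_pos_le_add ?_
  intro ε hε
  obtain ⟨a₁, ⟨t₁, ht₁, rfl⟩, h₁⟩ :=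
    exists_lt_of_csInf_lt (sfun_nonempty u z₁) (show ndd u z₁ < ndd u z₁ + ε/2 by linarith)
  obtain ⟨a₂, ⟨t₂, ht₂, rfl⟩, h₂⟩ :=
    exists_lt_of_csInf_lt (sfun_nonempty u z₂) (show ndd u z₂ < ndd u z₂ + ε/2 by linarith)
  set t := min t₁ t₂ / 2 with htdef
  have ht₁' : (0:ℝ) < t₁ := ht₁
  have ht₂' : (0:ℝ) < t₂ := ht₂
  have ht : 0 < t := by positivity
  have h2t : (0:ℝ) < 2 * t := by linarith
  have h2t₁ : 2 * t ≤ t₁ := by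
    have := min_le_left t₁ t₂; rw [htdef]; linarith
  have h2t₂ : 2 * t ≤ t₂ := by
    have := min_le_right t₁ t₂; rw [htdef]; linarith
  have key : sfun u (z₁ + z₂) t ≤ sfun u z₁ (2*t) + sfun u z₂ (2*t) := by
    have heq : u + t • (z₁ + z₂) =
        (1/2 : ℝ) • (u + (2*t) • z₁) + (1/2 : ℝ) • (u + (2*t) • z₂) := by
      module
    have hnorm : ‖u + t • (z₁ + z₂)‖
        ≤ (1/2) * ‖u + (2*t) • z₁‖ + (1/2) * ‖u + (2*t) • z₂‖ := by
      rw [heq]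
      refine (norm_add_le _ _).trans ?_
      rw [norm_smul, norm_smul]
      simp [Real.norm_eq_abs]
      try norm_num
    rw [sfun, sfun, sfun, ← add_div, div_le_div_iff₀ ht h2t]
    nlinarith
  have hmono₁ : sfun u z₁ (2*t) ≤ sfun u z₁ t₁ :=
    sfun_monotoneOn u z₁ h2t ht₁' h2t₁
  have hmono₂ : sfun u z₂ (2*t) ≤ sfun u z₂ t₂ :=
    sfun_monotoneOn u z₂ h2t ht₂' h2t₂
  have := ndd_le u (z₁ + z₂) ht
  linarith

lemma neg_ndd_neg_le (u z : Y) : -(ndd u (-z)) ≤ ndd u z := by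
  have := ndd_add u z (-z)
  rw [add_neg_cancel, ndd_zero] at this
  linarith

lemma eventually_pos : ∀ᶠ q : Y × ℝ in (𝓝 (0:Y)) ×ˢ (𝓝[>] (0:ℝ)), 0 < q.2 :=
  Filter.Eventually.prod_inr (self_mem_nhdsWithin) _

lemma clarke_norm_le (u z : Y) : clarkeDirDeriv (fun w : Y => ‖w‖) u z ≤ ‖z‖ := by
  have hpos : ∀ᶠ q : Y × ℝ in (𝓝 u) ×ˢ (𝓝[>] (0:ℝ)), 0 < q.2 :=
    Filter.Eventually.prod_inr (self_mem_nhdsWithin) _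
  have hev : ∀ᶠ q : Y × ℝ in (𝓝 u) ×ˢ (𝓝[>] (0:ℝ)),
      (‖q.1 + q.2 • z‖ - ‖q.1‖) / q.2 ≤ ‖z‖ := by
    filter_upwards [hpos] with q hq
    exact sfun_le q.1 z hq
  have hcob : IsCoboundedUnder (· ≤ ·) ((𝓝 u) ×ˢ (𝓝[>] (0:ℝ)))
      (fun q : Y × ℝ => (‖q.1 + q.2 • z‖ - ‖q.1‖) / q.2) := by
    refine isCoboundedUnder_le_of_eventually_le _ (x := -‖z‖) ?_
    filter_upwards [hpos] with q hq
    exact neg_norm_le_sfun q.1 z hq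
  exact Filter.limsup_le_of_le hcob hev

lemma ndd_le_clarke (u z : Y) : ndd u z ≤ clarkeDirDeriv (fun w : Y => ‖w‖) u z := by
  have hpos : ∀ᶠ q : Y × ℝ in (𝓝 u) ×ˢ (𝓝[>] (0:ℝ)), 0 < q.2 :=
    Filter.Eventually.prod_inr (self_mem_nhdsWithin) _
  have hbdd : IsBoundedUnder (· ≤ ·) ((𝓝 u) ×ˢ (𝓝[>] (0:ℝ)))
      (fun q : Y × ℝ => (‖q.1 + q.2 • z‖ - ‖q.1‖) / q.2) := by
    refine ⟨‖z‖, ?_⟩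
    rw [Filter.eventually_map]
    filter_upwards [hpos] with q hq
    exact sfun_le q.1 z hq
  refine le_limsup_of_frequently_le ?_ hbdd
  have htend : Tendsto (fun t : ℝ => ((u, t) : Y × ℝ)) (𝓝[>] (0:ℝ))
      ((𝓝 u) ×ˢ (𝓝[>] (0:ℝ))) :=
    Filter.Tendsto.prodMk tendsto_const_nhds tendsto_id
  refine htend.frequently ?_
  refine Filter.Eventually.frequently ?_
  filter_upwards [self_mem_nhdsWithin] with t ht
  exact ndd_le u z ht

lemma abs_le_of_mem_subdiff {u : Y} {q : Y →L[ℝ] ℝ}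
    (hq : q ∈ clarkeSubdiff (fun w : Y => ‖w‖) u) (z : Y) : |q z| ≤ ‖z‖ := by
  rw [abs_le]
  constructor
  · have h1 := (hq (-z)).trans (clarke_norm_le u (-z))
    rw [map_neg, norm_neg] at h1
    linarith
  · exact (hq z).trans (clarke_norm_le u z)

/-- Hahn–Banach support functional for the directional derivative of the norm. -/
lemma exists_support (u : Y) {z : Y} (hz : z ≠ 0) :
    ∃ q : Y →L[ℝ] ℝ, q ∈ clarkeSubdiff (fun w : Y => ‖w‖) u ∧ q z = ndd u z := by
  have hdom : ∀ x : (LinearPMap.mkSpanSingleton (K := ℝ) (σ := RingHom.id ℝ) z (ndd u z) hz).domain,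
      (LinearPMap.mkSpanSingleton (K := ℝ) (σ := RingHom.id ℝ) z (ndd u z) hz) x ≤ ndd u x := by
    rintro ⟨w, hw⟩
    obtain ⟨a, rfl⟩ := Submodule.mem_span_singleton.1 hw
    have happ : (LinearPMap.mkSpanSingleton (K := ℝ) (σ := RingHom.id ℝ) z (ndd u z) hz) ⟨a • z, hw⟩
        = a * ndd u z := by
      have := LinearPMap.mkSpanSingleton'_apply z (ndd u z)
        (fun c hc => (smul_eq_zero.1 hc).elim (fun hc' => by rw [hc', RingHom.id_apply, zero_smul])
          (fun hz' => absurd hz' hz)) a hw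
      simpa [smul_eq_mul] using this
    rw [happ]
    show a * ndd u z ≤ ndd u (a • z)
    rcases lt_trichotomy a 0 with ha | ha | ha
    · have hpos : 0 < -a := by linarith
      have h1 : ndd u (a • z) = (-a) * ndd u (-z) := by
        rw [show a • z = (-a) • (-z) by rw [smul_neg, neg_smul, neg_neg]]
        exact ndd_smul u (-z) hpos
      have h2 := neg_ndd_neg_le u z
      have h3 : (-a) * (-(ndd u z)) ≤ (-a) * ndd u (-z) := by
        have := neg_ndd_neg_le u z
        nlinarith
      rw [h1]
      nlinarith
    · subst ha
      rw [zero_smul, ndd_zero, zero_mul]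
    · rw [ndd_smul u z ha]
  obtain ⟨g, hg1, hg2⟩ := exists_extension_of_le_sublinear
    (LinearPMap.mkSpanSingleton (K := ℝ) (σ := RingHom.id ℝ) z (ndd u z) hz) (ndd u)
    (fun c hc w => ndd_smul u w hc) (ndd_add u) hdom
  have hbound : ∀ w : Y, ‖g w‖ ≤ 1 * ‖w‖ := by
    intro w
    rw [one_mul, Real.norm_eq_abs, abs_le]
    constructor
    · have := (hg2 (-w)).trans (ndd_le_norm u (-w))
      rw [map_neg, norm_neg] at this
      linarith
    · exact (hg2 w).trans (ndd_le_norm u w)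
  refine ⟨LinearMap.mkContinuous g 1 hbound, ?_, ?_⟩
  · intro w
    exact (hg2 w).trans (ndd_le_clarke u w)
  · have hzz : z ∈ Submodule.span ℝ ({z} : Set Y) := Submodule.mem_span_singleton_self z
    have := hg1 ⟨z, hzz⟩
    rw [LinearPMap.mkSpanSingleton_apply ℝ ℝ hz (ndd u z)] at this
    simpa using this

end GSAux

/-- If `f` is continuous and Gâteaux differentiable on the open set `U`, then the
singleton pseudo-Jacobian mapping `x ↦ {f'(x)}` satisfies the chain rule condition. -/


theorem gateaux_singleton_chainRuleCond
    {X Y : Type*} [NormedAddCommGroup X] [NormedSpace ℝ X] [CompleteSpace X]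
    [NormedAddCommGroup Y] [NormedSpace ℝ Y] [CompleteSpace Y]
    {U : Set X} (hUopen : IsOpen U)
    {f : X → Y} (hf : ContinuousOn f U)
    {f' : X → X →L[ℝ] Y} (hf' : ∀ x ∈ U, HasGateauxDerivAt f (f' x) x) :
    ChainRuleCond f (fun x : X => {f' x}) U := by
  intro x hx y hy
  have hu : f x - y ≠ 0 := sub_ne_zero.2 (Ne.symm hy)
  set S : Set (Y →L[ℝ] ℝ) := clarkeSubdiff (fun w : Y => ‖w‖) (f x - y) with hSdef
  have hA : pjComp f (fun x : X => {f' x}) x y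
      = (fun q : Y →L[ℝ] ℝ => q.comp (f' x)) '' S := by
    ext T
    constructor
    · rintro ⟨p, hp, T', hT', rfl⟩
      rw [convexHull_singleton, Set.mem_singleton_iff] at hT'
      subst hT'
      exact ⟨p, hp, rfl⟩
    · rintro ⟨p, hp, rfl⟩
      exact ⟨p, hp, f' x, by rw [convexHull_singleton]; exact Set.mem_singleton _, rfl⟩
  refine ⟨?_, ?_, ?_⟩
  · -- weak-star closedness
    rw [hA]
    set C : Set (WeakDual ℝ Y) :=
      {φ : WeakDual ℝ Y | ∀ w : Y, φ w ≤ clarkeDirDeriv (fun w : Y => ‖w‖) (f x - y) w}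
      with hC
    have hCclosed : IsClosed C := by
      have hCeq : C = ⋂ w : Y,
          {φ : WeakDual ℝ Y | φ w ≤ clarkeDirDeriv (fun w : Y => ‖w‖) (f x - y) w} := by
        ext φ; simp [hC, Set.mem_iInter]
      rw [hCeq]
      exact isClosed_iInter fun w =>
        isClosed_le (WeakDual.eval_continuous w) continuous_const
    have hball : IsCompact
        (WeakDual.toStrongDual ⁻¹' Metric.closedBall (0 : StrongDual ℝ Y) 1) :=
      WeakDual.isCompact_closedBall (0 : StrongDual ℝ Y) 1
    have hSeq : (StrongDual.toWeakDual '' S : Set (WeakDual ℝ Y))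
        = (WeakDual.toStrongDual ⁻¹' Metric.closedBall (0 : StrongDual ℝ Y) 1) ∩ C := by
      ext φ
      constructor
      · rintro ⟨p, hp, rfl⟩
        constructor
        · show WeakDual.toStrongDual (StrongDual.toWeakDual p)
            ∈ Metric.closedBall (0 : StrongDual ℝ Y) 1
          have hid : WeakDual.toStrongDual (StrongDual.toWeakDual p) = p := rfl
          rw [hid, Metric.mem_closedBall, dist_zero_right]
          refine ContinuousLinearMap.opNorm_le_bound _ zero_le_one fun z => ?_
          rw [one_mul, Real.norm_eq_abs]
          exact GSAux.abs_le_of_mem_subdiff hp z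
        · intro w
          exact hp w
      · rintro ⟨hφ1, hφ2⟩
        exact ⟨WeakDual.toStrongDual φ, fun w => hφ2 w, rfl⟩
    have hScpt : IsCompact (StrongDual.toWeakDual '' S) := by
      rw [hSeq]
      exact hball.inter_right hCclosed
    have hGcont : Continuous (fun φ : WeakDual ℝ Y =>
        (StrongDual.toWeakDual ((WeakDual.toStrongDual φ).comp (f' x)) :
          WeakDual ℝ X)) := by
      apply WeakDual.continuous_of_continuous_eval
      intro v
      exact WeakDual.eval_continuous (f' x v)
    have himg : (StrongDual.toWeakDual ''
          ((fun q : Y →L[ℝ] ℝ => q.comp (f' x)) '' S))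
        = (fun φ : WeakDual ℝ Y =>
            (StrongDual.toWeakDual ((WeakDual.toStrongDual φ).comp (f' x)) :
              WeakDual ℝ X)) '' (StrongDual.toWeakDual '' S) := by
      rw [Set.image_image, Set.image_image]
      rfl
    rw [himg]
    exact (hScpt.image hGcont).isClosed
  · -- convexity
    rw [hA]
    rintro a ⟨q₁, hq₁, rfl⟩ b ⟨q₂, hq₂, rfl⟩ s t hs ht hst
    refine ⟨s • q₁ + t • q₂, ?_, ?_⟩
    · intro w
      have h1 : s * q₁ w ≤ s * clarkeDirDeriv (fun w : Y => ‖w‖) (f x - y) w :=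
        mul_le_mul_of_nonneg_left (hq₁ w) hs
      have h2 : t * q₂ w ≤ t * clarkeDirDeriv (fun w : Y => ‖w‖) (f x - y) w :=
        mul_le_mul_of_nonneg_left (hq₂ w) ht
      have e : (s • q₁ + t • q₂) w = s * q₁ w + t * q₂ w := by
        simp [smul_eq_mul]
      have hsum : s * clarkeDirDeriv (fun w : Y => ‖w‖) (f x - y) w
          + t * clarkeDirDeriv (fun w : Y => ‖w‖) (f x - y) w
          = clarkeDirDeriv (fun w : Y => ‖w‖) (f x - y) w := by
        rw [← add_mul, hst, one_mul]
      rw [e]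
      linarith
    · ext v
      simp [smul_eq_mul]
  · -- pseudo-Jacobian property
    constructor
    · obtain ⟨q, hqS, -⟩ := GSAux.exists_support (f x - y) hu
      exact ⟨q.comp (f' x), hA ▸ ⟨q, hqS, rfl⟩⟩
    · intro p v
      set c := p 1 with hcdef
      have hp : ∀ r : ℝ, p r = c * r := by
        intro r
        have h1 : p r = p (r • (1:ℝ)) := by rw [smul_eq_mul, mul_one]
        rw [h1, map_smul, smul_eq_mul, mul_comm]
      obtain ⟨q, hqS, hqw⟩ :
          ∃ q ∈ S, q (f' x v) = GSAux.ndd (f x - y) (f' x v) := by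
        by_cases hw : f' x v = 0
        · obtain ⟨q, hqS, -⟩ := GSAux.exists_support (f x - y) hu
          exact ⟨q, hqS, by rw [hw, map_zero, GSAux.ndd_zero]⟩
        · obtain ⟨q, hqS, hqw⟩ := GSAux.exists_support (f x - y) hw
          exact ⟨q, hqS, hqw⟩
      have hsub : (𝓝[>] (0:ℝ)) ≤ (𝓝[≠] (0:ℝ)) :=
        nhdsWithin_mono 0 fun t ht => ne_of_gt ht
      have he : Tendsto (fun t : ℝ => ‖t⁻¹ • (f (x + t • v) - f x) - f' x v‖)
          (𝓝[>] (0:ℝ)) (𝓝 0) := by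
        have h0 := (((hf' x hx v).mono_left hsub).sub
          (tendsto_const_nhds (x := f' x v))).norm
        simpa using h0
      have key : ∀ t : ℝ, 0 < t →
          |(‖f (x + t • v) - y‖ - ‖f x - y‖) / t - GSAux.sfun (f x - y) (f' x v) t|
            ≤ ‖t⁻¹ • (f (x + t • v) - f x) - f' x v‖ := by
        intro t ht
        simp only [GSAux.sfun]
        rw [div_sub_div_same, abs_div, abs_of_pos ht]
        have hnum : ‖f (x + t • v) - y‖ - ‖f x - y‖
            - (‖f x - y + t • f' x v‖ - ‖f x - y‖)
            = ‖f (x + t • v) - y‖ - ‖f x - y + t • f' x v‖ := by ring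
        rw [hnum, div_le_iff₀ ht]
        calc |‖f (x + t • v) - y‖ - ‖f x - y + t • f' x v‖|
            ≤ ‖(f (x + t • v) - y) - (f x - y + t • f' x v)‖ :=
              abs_norm_sub_norm_le _ _
          _ = ‖t • (t⁻¹ • (f (x + t • v) - f x) - f' x v)‖ := by
              congr 1
              rw [smul_sub, smul_smul, mul_inv_cancel₀ (ne_of_gt ht), one_smul]
              abel
          _ = ‖t⁻¹ • (f (x + t • v) - f x) - f' x v‖ * t := by
              rw [norm_smul, Real.norm_eq_abs, abs_of_pos ht, mul_comm]
      have hF : Tendsto (fun t : ℝ => (‖f (x + t • v) - y‖ - ‖f x - y‖) / t)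
          (𝓝[>] (0:ℝ)) (𝓝 (GSAux.ndd (f x - y) (f' x v))) := by
        have hlow : Tendsto (fun t : ℝ => GSAux.sfun (f x - y) (f' x v) t
            - ‖t⁻¹ • (f (x + t • v) - f x) - f' x v‖)
            (𝓝[>] (0:ℝ)) (𝓝 (GSAux.ndd (f x - y) (f' x v))) := by
          simpa using (GSAux.tendsto_sfun (f x - y) (f' x v)).sub he
        have hupp : Tendsto (fun t : ℝ => GSAux.sfun (f x - y) (f' x v) t
            + ‖t⁻¹ • (f (x + t • v) - f x) - f' x v‖)
            (𝓝[>] (0:ℝ)) (𝓝 (GSAux.ndd (f x - y) (f' x v))) := by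
          simpa using (GSAux.tendsto_sfun (f x - y) (f' x v)).add he
        refine tendsto_of_tendsto_of_tendsto_of_le_of_le' hlow hupp ?_ ?_
        · filter_upwards [self_mem_nhdsWithin] with t ht
          have := abs_le.1 (key t ht)
          linarith [this.1]
        · filter_upwards [self_mem_nhdsWithin] with t ht
          have := abs_le.1 (key t ht)
          linarith [this.2]
      have hdini : diniUpper (fun z : X => p ‖f z - y‖) x v
          = c * GSAux.ndd (f x - y) (f' x v) := by
        rw [diniUpper]
        have hfun : (fun t : ℝ =>
              ((fun z : X => p ‖f z - y‖) (x + t • v) - (fun z : X => p ‖f z - y‖) x) / t)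
            = fun t : ℝ => c * ((‖f (x + t • v) - y‖ - ‖f x - y‖) / t) := by
          funext t
          simp only []
          rw [hp, hp]
          ring
        rw [hfun]
        exact (hF.const_mul c).limsup_eq
      show diniUpper (fun z : X => p ‖f z - y‖) x v
          ≤ sSup ((fun T : X →L[ℝ] ℝ => p (T v)) '' pjComp f (fun x : X => {f' x}) x y)
      rw [hdini]
      refine le_csSup ?_ ?_
      · refine ⟨|c| * ‖f' x v‖, ?_⟩
        rintro r ⟨T, hT, rfl⟩
        rw [hA] at hT
        obtain ⟨q', hq', rfl⟩ := hT
        have h1 : (fun T : X →L[ℝ] ℝ => p (T v)) ((fun q : Y →L[ℝ] ℝ => q.comp (f' x)) q')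
            = c * q' (f' x v) := by
          show p ((q'.comp (f' x)) v) = c * q' (f' x v)
          rw [ContinuousLinearMap.comp_apply, hp]
        rw [h1]
        calc c * q' (f' x v) ≤ |c * q' (f' x v)| := le_abs_self _
          _ = |c| * |q' (f' x v)| := abs_mul _ _
          _ ≤ |c| * ‖f' x v‖ :=
            mul_le_mul_of_nonneg_left (GSAux.abs_le_of_mem_subdiff hq' (f' x v))
              (abs_nonneg c)
      · refine ⟨q.comp (f' x), hA ▸ ⟨q, hqS, rfl⟩, ?_⟩
        show p ((q.comp (f' x)) v) = c * GSAux.ndd (f x - y) (f' x v)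
        rw [ContinuousLinearMap.comp_apply, hp, hqw]

end
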